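/- Let w be a linearly ordered set and p : [w]² → {≥, ⊥, u} a valuation function. Let A(p) = Fr(w)/N(p) where N(p) is the ideal generated by all u_j · u_i with p(i,j) = ⊥ and all u_j · ¬u_i with p(i,j) = ≥, and let x_i be the image of u_i. Then for every i ∈ w, x_i is not in the ideal of A(p) generated by {x_j : j > i}. In particular each x_i is nonzero, the x_i are pairwise distinct, and i < j implies x_i ≰ x_j. -/
import Mathlib


/-- The three values `≥`, `⊥`, "undefined" of a valuation function. -/
inductive VVal : Type
  | ge : VVal
  | perp : VVal
  | und : VVal
deriving DecidableEq

/-- `p` is a valuation function on the linearly ordered set `W` (only the values on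
pairs `i < j` are relevant). -/
structure IsValuation {W : Type u} [LinearOrder W] (p : W → W → VVal) : Prop where
  trans_ge : ∀ i j k : W, i < j → j < k →
    p i j = VVal.ge → p j k = VVal.ge → p i k = VVal.ge
  mix1 : ∀ i j k : W, i < j → j < k →
    p i j = VVal.perp → p i k = VVal.ge → p j k = VVal.perp
  mix2 : ∀ i j k : W, i < j → j < k →
    p i j = VVal.ge → p i k = VVal.perp → p j k = VVal.perp
  mix3 : ∀ i j k : W, i < j → j < k →
    p i j = VVal.perp → p j k = VVal.ge → p i k = VVal.perp

/-- The elements of the Boolean subalgebra generated by a set `S`. -/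
inductive BAGen {α : Type v} [BooleanAlgebra α] (S : Set α) : α → Prop
  | base {a : α} : a ∈ S → BAGen S a
  | bot : BAGen S ⊥
  | sup {a b : α} : BAGen S a → BAGen S b → BAGen S (a ⊔ b)
  | compl {a : α} : BAGen S a → BAGen S aᶜ

/-- Remark 3.2 for `A(p) = Fr(w)/N(p)`: each canonical generator `x i = c (u i)` is not
in the ideal generated by `{x j : j > i}`; in particular the `x i` are nonzero, pairwise
distinct, and `i < j` implies `x i ≰ x j`. -/
theorem generator_not_in_upper_ideal {W Fr Q : Type u} [LinearOrder W]
    [BooleanAlgebra Fr] [BooleanAlgebra Q]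
    (u : W → Fr)
    (hind : ∀ s t : Finset W, (∀ i ∈ s, i ∉ t) →
      s.inf u ⊓ t.inf (fun i => (u i)ᶜ) ≠ ⊥)
    (hgen : ∀ a : Fr, BAGen (Set.range u) a)
    (p : W → W → VVal) (hp : IsValuation p)
    (c : BoundedLatticeHom Fr Q) (hsurj : Function.Surjective c)
    (hker : ∀ a : Fr, c a = ⊥ ↔ ∃ F : Finset (W × W),
      (∀ q ∈ F, q.1 < q.2 ∧ (p q.1 q.2 = VVal.perp ∨ p q.1 q.2 = VVal.ge)) ∧
      a ≤ F.sup (fun q => if p q.1 q.2 = VVal.perp then u q.2 ⊓ u q.1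
        else u q.2 ⊓ (u q.1)ᶜ)) :
    (∀ i : W, ¬ ∃ F : Finset W, (∀ j ∈ F, i < j) ∧ c (u i) ≤ F.sup (fun j => c (u j))) ∧
      (∀ i : W, c (u i) ≠ ⊥) ∧ Function.Injective (fun i : W => c (u i)) ∧
      (∀ i j : W, i < j → ¬ c (u i) ≤ c (u j)) := by
  classical
  have hcompl : ∀ a : Fr, c aᶜ = (c a)ᶜ := by
    intro a
    refine (compl_unique ?_ ?_).symm
    · rw [← map_inf, inf_compl_eq_bot, map_bot]
    · rw [← map_sup, sup_compl_eq_top, map_top]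
  have part1 : ∀ i : W, ¬ ∃ F : Finset W, (∀ j ∈ F, i < j) ∧
      c (u i) ≤ F.sup (fun j => c (u j)) := by
    rintro i ⟨F, hF, hle⟩
    set a : Fr := u i ⊓ F.inf (fun j => (u j)ᶜ) with ha
    have hca : c a = ⊥ := by
      have h1 : c a = c (u i) ⊓ F.inf (fun j => (c (u j))ᶜ) := by
        rw [ha, map_inf, map_finset_inf]
        congr 1
        exact Finset.inf_congr rfl (fun j _ => hcompl (u j))
      rw [h1]
      refine le_bot_iff.mp ?_
      calc c (u i) ⊓ F.inf (fun j => (c (u j))ᶜ)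
          ≤ F.sup (fun j => c (u j)) ⊓ F.inf (fun j => (c (u j))ᶜ) :=
            inf_le_inf_right _ hle
        _ = F.sup (fun j => c (u j) ⊓ F.inf (fun j => (c (u j))ᶜ)) :=
            Finset.sup_inf_distrib_right _ _ _
        _ ≤ ⊥ := Finset.sup_le (fun j hj => by
            calc c (u j) ⊓ F.inf (fun j => (c (u j))ᶜ)
                ≤ c (u j) ⊓ (c (u j))ᶜ := inf_le_inf_left _ (Finset.inf_le hj)
              _ = ⊥ := inf_compl_eq_bot
              _ ≤ ⊥ := le_rfl)
    obtain ⟨G, hG, haG⟩ := (hker a).mp hca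
    set V : W → Prop := fun k => k = i ∨ (k < i ∧ p k i = VVal.ge) with hV
    set S0 : Finset W := insert i (F ∪ G.image Prod.fst ∪ G.image Prod.snd) with hS0
    set s : Finset W := S0.filter V with hs
    set t : Finset W := S0.filter (fun k => ¬ V k) with ht
    have hdisj : ∀ k ∈ s, k ∉ t := by
      intro k hk hk'
      rw [hs, Finset.mem_filter] at hk
      rw [ht, Finset.mem_filter] at hk'
      exact hk'.2 hk.2
    set e : Fr := s.inf u ⊓ t.inf (fun k => (u k)ᶜ) with he
    have hene : e ≠ ⊥ := hind s t hdisj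
    have he_s : ∀ k ∈ s, e ≤ u k := fun k hk =>
      le_trans inf_le_left (Finset.inf_le hk)
    have he_t : ∀ k ∈ t, e ≤ (u k)ᶜ := fun k hk =>
      le_trans inf_le_right (Finset.inf_le hk)
    have hi_s : i ∈ s := by
      rw [hs, Finset.mem_filter]
      exact ⟨Finset.mem_insert_self _ _, Or.inl rfl⟩
    have hF_t : ∀ j ∈ F, j ∈ t := by
      intro j hj
      have hij : i < j := hF j hj
      rw [ht, Finset.mem_filter]
      refine ⟨Finset.mem_insert_of_mem (by simp [hj]), ?_⟩
      rintro (rfl | ⟨hlt, _⟩)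
      · exact lt_irrefl _ hij
      · exact lt_asymm hij hlt
    have he_a : e ≤ a := by
      rw [ha]
      exact le_inf (he_s i hi_s) (Finset.le_inf fun j hj => he_t j (hF_t j hj))
    have he_G : e ≤ G.sup (fun q => if p q.1 q.2 = VVal.perp then u q.2 ⊓ u q.1
        else u q.2 ⊓ (u q.1)ᶜ) := le_trans he_a haG
    have hmem1 : ∀ q ∈ G, q.1 ∈ S0 := by
      intro q hq
      exact Finset.mem_insert_of_mem (by
        simp only [Finset.mem_union, Finset.mem_image]
        exact Or.inl (Or.inr ⟨q, hq, rfl⟩))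
    have hmem2 : ∀ q ∈ G, q.2 ∈ S0 := by
      intro q hq
      exact Finset.mem_insert_of_mem (by
        simp only [Finset.mem_union, Finset.mem_image]
        exact Or.inr ⟨q, hq, rfl⟩)
    have he_g : ∀ q ∈ G, e ⊓ (if p q.1 q.2 = VVal.perp then u q.2 ⊓ u q.1
        else u q.2 ⊓ (u q.1)ᶜ) = ⊥ := by
      intro q hq
      obtain ⟨hq12, hval⟩ := hG q hq
      by_cases hperp : p q.1 q.2 = VVal.perp
      · rw [if_pos hperp]
        -- not both V q.1 and V q.2
        have hnboth : ¬ (V q.1 ∧ V q.2) := by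
          rintro ⟨hv1, hv2⟩
          rcases hv2 with h2 | ⟨h2i, h2g⟩
          · rcases hv1 with h1 | ⟨h1i, h1g⟩
            · exact absurd (h1.trans h2.symm) (ne_of_lt hq12)
            · rw [← h2, hperp] at h1g; exact VVal.noConfusion h1g
          · rcases hv1 with h1 | ⟨h1i, h1g⟩
            · have h' : q.1 < i := lt_trans hq12 h2i
              rw [h1] at h'; exact lt_irrefl _ h'
            · have := hp.mix3 q.1 q.2 i hq12 h2i hperp h2g
              rw [this] at h1g; exact VVal.noConfusion h1g
        by_cases hv1 : V q.1
        · have hv2 : ¬ V q.2 := fun h => hnboth ⟨hv1, h⟩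
          have h2t : q.2 ∈ t := by
            rw [ht, Finset.mem_filter]; exact ⟨hmem2 q hq, hv2⟩
          refine le_bot_iff.mp ?_
          calc e ⊓ (u q.2 ⊓ u q.1) ≤ (u q.2)ᶜ ⊓ u q.2 :=
              inf_le_inf (he_t _ h2t) inf_le_left
            _ = ⊥ := compl_inf_eq_bot
        · have h1t : q.1 ∈ t := by
            rw [ht, Finset.mem_filter]; exact ⟨hmem1 q hq, hv1⟩
          refine le_bot_iff.mp ?_
          calc e ⊓ (u q.2 ⊓ u q.1) ≤ (u q.1)ᶜ ⊓ u q.1 :=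
              inf_le_inf (he_t _ h1t) inf_le_right
            _ = ⊥ := compl_inf_eq_bot
      · rw [if_neg hperp]
        have hge : p q.1 q.2 = VVal.ge := hval.resolve_left hperp
        by_cases hv2 : V q.2
        · -- then V q.1
          have hv1 : V q.1 := by
            rcases hv2 with h2 | ⟨h2i, h2g⟩
            · refine Or.inr ⟨?_, ?_⟩ <;> rw [← h2] <;> assumption
            · exact Or.inr ⟨lt_trans hq12 h2i,
                hp.trans_ge q.1 q.2 i hq12 h2i hge h2g⟩
          have h1s : q.1 ∈ s := by
            rw [hs, Finset.mem_filter]; exact ⟨hmem1 q hq, hv1⟩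
          refine le_bot_iff.mp ?_
          calc e ⊓ (u q.2 ⊓ (u q.1)ᶜ) ≤ u q.1 ⊓ (u q.1)ᶜ :=
              inf_le_inf (he_s _ h1s) inf_le_right
            _ = ⊥ := inf_compl_eq_bot
        · have h2t : q.2 ∈ t := by
            rw [ht, Finset.mem_filter]; exact ⟨hmem2 q hq, hv2⟩
          refine le_bot_iff.mp ?_
          calc e ⊓ (u q.2 ⊓ (u q.1)ᶜ) ≤ (u q.2)ᶜ ⊓ u q.2 :=
              inf_le_inf (he_t _ h2t) inf_le_left
            _ = ⊥ := compl_inf_eq_bot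
    apply hene
    refine le_bot_iff.mp ?_
    calc e = e ⊓ G.sup (fun q => if p q.1 q.2 = VVal.perp then u q.2 ⊓ u q.1
          else u q.2 ⊓ (u q.1)ᶜ) := (inf_eq_left.mpr he_G).symm
      _ = G.sup (fun q => e ⊓ (if p q.1 q.2 = VVal.perp then u q.2 ⊓ u q.1
          else u q.2 ⊓ (u q.1)ᶜ)) := Finset.sup_inf_distrib_left _ _ _
      _ ≤ ⊥ := Finset.sup_le (fun q hq => le_of_eq (he_g q hq))
  have part2 : ∀ i : W, c (u i) ≠ ⊥ := by
    intro i h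
    exact part1 i ⟨∅, by simp, by simp [h]⟩
  have part4 : ∀ i j : W, i < j → ¬ c (u i) ≤ c (u j) := by
    intro i j hij hle
    exact part1 i ⟨{j}, by simpa using hij, by simpa using hle⟩
  refine ⟨part1, part2, ?_, part4⟩
  intro i j h
  simp only at h
  by_contra hne
  rcases Ne.lt_or_gt hne with hlt | hlt
  · exact part4 i j hlt (le_of_eq h)
  · exact part4 j i hlt (le_of_eq h.symm)
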